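/- Let R be an n⁴ complex array obeying the quantum Yang–Baxter equation and η an invertible n×n matrix that is R-covariant. Then for every m ≥ 1 and all multi-indices, Σ_{b_1,…,b_m} ([m;R]!)^{a_1⋯a_m}_{b_1⋯b_m} η^{b_1 i_1} ⋯ η^{b_m i_m} = Σ_{b_1,…,b_m} η^{a_1 b_1} ⋯ η^{a_m b_m} ([m;R]!)^{i_m⋯i_1}_{b_m⋯b_1}. -/

import Mathlib

open scoped ComplexConjugate

noncomputable section

/-- An n⁴ array `R^i{}_j{}^k{}_l` viewed as an n²×n² matrix with row index `(i,k)`,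
column index `(j,l)`. -/
def toMat (n : ℕ) (R : Fin n → Fin n → Fin n → Fin n → ℂ) :
    Matrix (Fin n × Fin n) (Fin n × Fin n) ℂ :=
  Matrix.of fun p q => R p.1 q.1 p.2 q.2

/-- Entries `(R⁻¹)^i{}_j{}^k{}_l` of the matrix inverse of `R`. -/
def invEntry (n : ℕ) (R : Fin n → Fin n → Fin n → Fin n → ℂ)
    (i j k l : Fin n) : ℂ :=
  (toMat n R)⁻¹ (i, k) (j, l)

/-- `R` is of real type I: `conj (R^i{}_j{}^k{}_l) = R^l{}_k{}^j{}_i`. -/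
def RealTypeI (n : ℕ) (R : Fin n → Fin n → Fin n → Fin n → ℂ) : Prop :=
  ∀ i j k l, conj (R i j k l) = R l k j i

/-- `R` is of antireal type I: `R` invertible and
`conj (R^i{}_j{}^k{}_l) = (R⁻¹)^j{}_i{}^l{}_k`. -/
def AntirealTypeI (n : ℕ) (R : Fin n → Fin n → Fin n → Fin n → ℂ) : Prop :=
  IsUnit (toMat n R) ∧ ∀ i j k l, conj (R i j k l) = invEntry n R j i l k

/-- `R` is of real type II w.r.t. the involution `σ`:
`conj (R^i{}_j{}^k{}_l) = R^{σk}{}_{σl}{}^{σi}{}_{σj}`. -/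
def RealTypeII (n : ℕ) (R : Fin n → Fin n → Fin n → Fin n → ℂ)
    (σ : Fin n → Fin n) : Prop :=
  ∀ i j k l, conj (R i j k l) = R (σ k) (σ l) (σ i) (σ j)

/-- `R` is of antireal type II w.r.t. the involution `σ`: `R` invertible and
`conj (R^i{}_j{}^k{}_l) = (R⁻¹)^{σi}{}_{σj}{}^{σk}{}_{σl}`. -/
def AntirealTypeII (n : ℕ) (R : Fin n → Fin n → Fin n → Fin n → ℂ)
    (σ : Fin n → Fin n) : Prop :=
  IsUnit (toMat n R) ∧
    ∀ i j k l, conj (R i j k l) = invEntry n R (σ i) (σ j) (σ k) (σ l)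

/-- The metric `η` (entries `η^{ij} = η i j`) is `R`-covariant:
`Σ η^{ia} η^{jb} R^k{}_a{}^l{}_b = Σ R^i{}_a{}^j{}_b η^{ak} η^{bl}`. -/
def MetricCovariant (n : ℕ) (R : Fin n → Fin n → Fin n → Fin n → ℂ)
    (η : Matrix (Fin n) (Fin n) ℂ) : Prop :=
  ∀ i j k l, (∑ a : Fin n, ∑ b : Fin n, η i a * η j b * R k a l b) =
    ∑ a : Fin n, ∑ b : Fin n, R i a j b * η a k * η b l

/-- The metric `η` is real: `conj (η^{ij}) = η_{ji}`, where the lower-index entries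
`η_{ij}` are those of the transposed inverse, i.e. `η_{ji} = (η⁻¹) i j`. -/
def MetricReal (n : ℕ) (η : Matrix (Fin n) (Fin n) ℂ) : Prop :=
  ∀ i j, conj (η i j) = η⁻¹ i j

/-- The matrix `PR` on ℂⁿ⊗ℂⁿ: `(PR)^i{}_j{}^k{}_l = R^k{}_j{}^i{}_l`. -/
def PRmat (n : ℕ) (R : Fin n → Fin n → Fin n → Fin n → ℂ) :
    Matrix (Fin n × Fin n) (Fin n × Fin n) ℂ :=
  Matrix.of fun p q => R p.2 q.1 p.1 q.2

/-- The matrix `A_{k+1,k+2}` on `(ℂⁿ)^{⊗m}` acting as the two-site matrix `A` in the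
(0-indexed) tensor factors `k, k+1` and as the identity elsewhere (the identity
matrix if `k+1 ≥ m`). -/
def site (n m : ℕ) (A : Matrix (Fin n × Fin n) (Fin n × Fin n) ℂ) (k : ℕ) :
    Matrix (Fin m → Fin n) (Fin m → Fin n) ℂ :=
  if h : k + 1 < m then
    Matrix.of fun f g =>
      A (f ⟨k, Nat.lt_of_succ_lt h⟩, f ⟨k + 1, h⟩)
        (g ⟨k, Nat.lt_of_succ_lt h⟩, g ⟨k + 1, h⟩) *
      ∏ t : Fin m,
        (if t.1 = k ∨ t.1 = k + 1 then (1 : ℂ) else if f t = g t then 1 else 0)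
  else 1

/-- The ordered product `A_{off+1,off+2} A_{off+2,off+3} ⋯ A_{off+r,off+r+1}`
(1-indexed tensor positions) on `(ℂⁿ)^{⊗m}`; the identity for `r = 0`. -/
def chain (n m : ℕ) (A : Matrix (Fin n × Fin n) (Fin n × Fin n) ℂ)
    (off r : ℕ) : Matrix (Fin m → Fin n) (Fin m → Fin n) ℂ :=
  ((List.range r).map fun s => site n m A (off + s)).prod

/-- The reversed ordered product `A_{off+r,off+r+1} ⋯ A_{off+2,off+3} A_{off+1,off+2}`
on `(ℂⁿ)^{⊗m}`; the identity for `r = 0`. -/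
def chainOp (n m : ℕ) (A : Matrix (Fin n × Fin n) (Fin n × Fin n) ℂ)
    (off r : ℕ) : Matrix (Fin m → Fin n) (Fin m → Fin n) ℂ :=
  (((List.range r).reverse).map fun s => site n m A (off + s)).prod

/-- The braided integer `[k;R]` acting in the tensor factors `off+1,…,off+k`
(1-indexed) of `(ℂⁿ)^{⊗m}`:
`[k;R] = Σ_{r=0}^{k−1} (PR)_{12}(PR)_{23}⋯(PR)_{r,r+1}` (shifted by `off`). -/
def braidedInt (n m : ℕ) (R : Fin n → Fin n → Fin n → Fin n → ℂ)
    (off k : ℕ) : Matrix (Fin m → Fin n) (Fin m → Fin n) ℂ :=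
  ∑ r ∈ Finset.range k, chain n m (PRmat n R) off r

/-- The opposite braided integer `[k;R]^{op}` acting in the tensor factors
`off+1,…,off+k` of `(ℂⁿ)^{⊗m}`:
`[k;R]^{op} = Σ_{r=0}^{k−1} (PR)_{r,r+1}⋯(PR)_{23}(PR)_{12}` (shifted by `off`). -/
def braidedIntOp (n m : ℕ) (R : Fin n → Fin n → Fin n → Fin n → ℂ)
    (off k : ℕ) : Matrix (Fin m → Fin n) (Fin m → Fin n) ℂ :=
  ∑ r ∈ Finset.range k, chainOp n m (PRmat n R) off r

/-- The braided factorial `[m;R]! = [2;R]_{m−1,m} [3;R]_{m−2,…,m} ⋯ [m;R]_{1,…,m}`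
on `(ℂⁿ)^{⊗m}`. -/
def braidedFact (n m : ℕ) (R : Fin n → Fin n → Fin n → Fin n → ℂ) :
    Matrix (Fin m → Fin n) (Fin m → Fin n) ℂ :=
  ((List.range (m - 1)).map fun t => braidedInt n m R (m - (t + 2)) (t + 2)).prod

/-- The opposite braided factorial
`[m;R]^{op}! = [m;R]^{op}_{1,…,m} ⋯ [3;R]^{op}_{m−2,…,m} [2;R]^{op}_{m−1,m}`. -/
def braidedFactOp (n m : ℕ) (R : Fin n → Fin n → Fin n → Fin n → ℂ) :
    Matrix (Fin m → Fin n) (Fin m → Fin n) ℂ :=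
  (((List.range (m - 1)).reverse).map fun t =>
    braidedIntOp n m R (m - (t + 2)) (t + 2)).prod

/-- `R₁₂` on ℂⁿ⊗ℂⁿ⊗ℂⁿ. -/
def Rmat12 (n : ℕ) (R : Fin n → Fin n → Fin n → Fin n → ℂ) :
    Matrix (Fin n × Fin n × Fin n) (Fin n × Fin n × Fin n) ℂ :=
  Matrix.of fun p q =>
    R p.1 q.1 p.2.1 q.2.1 * (if p.2.2 = q.2.2 then 1 else 0)

/-- `R₁₃` on ℂⁿ⊗ℂⁿ⊗ℂⁿ. -/
def Rmat13 (n : ℕ) (R : Fin n → Fin n → Fin n → Fin n → ℂ) :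
    Matrix (Fin n × Fin n × Fin n) (Fin n × Fin n × Fin n) ℂ :=
  Matrix.of fun p q =>
    R p.1 q.1 p.2.2 q.2.2 * (if p.2.1 = q.2.1 then 1 else 0)

/-- `R₂₃` on ℂⁿ⊗ℂⁿ⊗ℂⁿ. -/
def Rmat23 (n : ℕ) (R : Fin n → Fin n → Fin n → Fin n → ℂ) :
    Matrix (Fin n × Fin n × Fin n) (Fin n × Fin n × Fin n) ℂ :=
  Matrix.of fun p q =>
    (if p.1 = q.1 then (1 : ℂ) else 0) * R p.2.1 q.2.1 p.2.2 q.2.2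

/-- The quantum Yang–Baxter equation `R₁₂R₁₃R₂₃ = R₂₃R₁₃R₁₂`. -/
def QYBE (n : ℕ) (R : Fin n → Fin n → Fin n → Fin n → ℂ) : Prop :=
  Rmat12 n R * Rmat13 n R * Rmat23 n R = Rmat23 n R * Rmat13 n R * Rmat12 n R

/-- The array `R₂₁`, with `R₂₁^i{}_j{}^k{}_l = R^k{}_l{}^i{}_j`. -/
def swapR (n : ℕ) (R : Fin n → Fin n → Fin n → Fin n → ℂ) :
    Fin n → Fin n → Fin n → Fin n → ℂ :=
  fun i j k l => R k l i j


namespace Stmt15Aux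

variable {n m : ℕ}

/-- function update at slots k, k+1 -/
def upd (n m : ℕ) (k : ℕ) (hk : k + 1 < m) (f : Fin m → Fin n) (x y : Fin n) :
    Fin m → Fin n :=
  Function.update (Function.update f ⟨k, Nat.lt_of_succ_lt hk⟩ x) ⟨k + 1, hk⟩ y

lemma upd_a (k : ℕ) (hk : k + 1 < m) (f : Fin m → Fin n) (x y : Fin n)
    (h : k < m) : upd n m k hk f x y ⟨k, h⟩ = x := by
  unfold upd
  rw [Function.update_of_ne (by simp [Fin.ext_iff]), Function.update_self]

lemma upd_b (k : ℕ) (hk : k + 1 < m) (f : Fin m → Fin n) (x y : Fin n)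
    (h : k + 1 < m) : upd n m k hk f x y ⟨k + 1, h⟩ = y := by
  unfold upd
  rw [Function.update_self]

lemma upd_ne (k : ℕ) (hk : k + 1 < m) (f : Fin m → Fin n) (x y : Fin n)
    (t : Fin m) (h1 : (t : ℕ) ≠ k) (h2 : (t : ℕ) ≠ k + 1) :
    upd n m k hk f x y t = f t := by
  unfold upd
  rw [Function.update_of_ne (by simp [Fin.ext_iff, h2]),
    Function.update_of_ne (by simp [Fin.ext_iff, h1])]

lemma delta_eq (k : ℕ) (f g : Fin m → Fin n) :
    (∏ t : Fin m, (if (t : ℕ) = k ∨ (t : ℕ) = k + 1 then (1 : ℂ)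
        else if f t = g t then 1 else 0))
      = if (∀ t : Fin m, (t : ℕ) = k ∨ (t : ℕ) = k + 1 ∨ f t = g t) then 1 else 0 := by
  by_cases h : ∀ t : Fin m, (t : ℕ) = k ∨ (t : ℕ) = k + 1 ∨ f t = g t
  · rw [if_pos h]
    apply Finset.prod_eq_one
    intro t _
    rcases h t with h1 | h2 | h3
    · simp [h1]
    · simp [h2]
    · by_cases hk : (t : ℕ) = k ∨ (t : ℕ) = k + 1 <;> simp [hk, h3]
  · rw [if_neg h]
    push_neg at h
    obtain ⟨t, h1, h2, h3⟩ := h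
    exact Finset.prod_eq_zero (Finset.mem_univ t) (by simp [h1, h2, h3])

lemma site_apply (A : Matrix (Fin n × Fin n) (Fin n × Fin n) ℂ) (k : ℕ)
    (hk : k + 1 < m) (f g : Fin m → Fin n) :
    site n m A k f g
      = A (f ⟨k, Nat.lt_of_succ_lt hk⟩, f ⟨k + 1, hk⟩)
          (g ⟨k, Nat.lt_of_succ_lt hk⟩, g ⟨k + 1, hk⟩) *
        if (∀ t : Fin m, (t : ℕ) = k ∨ (t : ℕ) = k + 1 ∨ f t = g t) then 1 else 0 := by
  rw [site, dif_pos hk]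
  simp only [Matrix.of_apply]
  rw [delta_eq]

lemma site_not (A : Matrix (Fin n × Fin n) (Fin n × Fin n) ℂ) (k : ℕ)
    (hk : ¬ k + 1 < m) : site n m A k = 1 := by
  rw [site, dif_neg hk]

lemma cond_iff (k : ℕ) (hk : k + 1 < m) (f h : Fin m → Fin n) :
    (∀ t : Fin m, (t : ℕ) = k ∨ (t : ℕ) = k + 1 ∨ f t = h t)
      ↔ upd n m k hk f (h ⟨k, Nat.lt_of_succ_lt hk⟩) (h ⟨k + 1, hk⟩) = h := by
  constructor
  · intro hc
    funext t
    by_cases h1 : (t : ℕ) = k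
    · have : t = (⟨k, Nat.lt_of_succ_lt hk⟩ : Fin m) := Fin.ext h1
      rw [this, upd_a]
    · by_cases h2 : (t : ℕ) = k + 1
      · have : t = (⟨k + 1, hk⟩ : Fin m) := Fin.ext h2
        rw [this, upd_b]
      · rw [upd_ne _ _ _ _ _ t h1 h2]
        rcases hc t with hc1 | hc2 | hc3
        · exact absurd hc1 h1
        · exact absurd hc2 h2
        · exact hc3
  · intro he t
    by_cases h1 : (t : ℕ) = k
    · exact Or.inl h1
    · by_cases h2 : (t : ℕ) = k + 1
      · exact Or.inr (Or.inl h2)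
      · refine Or.inr (Or.inr ?_)
        conv_rhs => rw [← he]
        rw [upd_ne _ _ _ _ _ t h1 h2]

lemma sum_upd (k : ℕ) (hk : k + 1 < m) (f : Fin m → Fin n)
    (F : (Fin m → Fin n) → ℂ) :
    (∑ h : Fin m → Fin n,
      (if upd n m k hk f (h ⟨k, Nat.lt_of_succ_lt hk⟩) (h ⟨k + 1, hk⟩) = h
        then (1 : ℂ) else 0) * F h)
      = ∑ x : Fin n, ∑ y : Fin n, F (upd n m k hk f x y) := by
  classical
  have himg : ∀ h : Fin m → Fin n,
      h ∉ Finset.image (fun p : Fin n × Fin n => upd n m k hk f p.1 p.2) Finset.univ →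
      (if upd n m k hk f (h ⟨k, Nat.lt_of_succ_lt hk⟩) (h ⟨k + 1, hk⟩) = h
        then (1 : ℂ) else 0) * F h = 0 := by
    intro h hh
    rw [if_neg, zero_mul]
    intro heq
    exact hh (Finset.mem_image.2 ⟨(h ⟨k, Nat.lt_of_succ_lt hk⟩, h ⟨k + 1, hk⟩),
      Finset.mem_univ _, heq⟩)
  rw [← Finset.sum_subset (Finset.subset_univ _) (fun h _ hh => himg h hh)]
  rw [Finset.sum_image (by
    intro p _ q _ hpq
    have h1 := congrFun hpq ⟨k, Nat.lt_of_succ_lt hk⟩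
    have h2 := congrFun hpq ⟨k + 1, hk⟩
    beta_reduce at h1 h2
    rw [upd_a, upd_a] at h1
    rw [upd_b, upd_b] at h2
    exact Prod.ext h1 h2)]
  rw [Fintype.sum_prod_type]
  apply Finset.sum_congr rfl
  intro x _
  apply Finset.sum_congr rfl
  intro y _
  rw [upd_a, upd_b, if_pos rfl, one_mul]

lemma site_mul_apply (A : Matrix (Fin n × Fin n) (Fin n × Fin n) ℂ)
    (M : Matrix (Fin m → Fin n) (Fin m → Fin n) ℂ) (k : ℕ) (hk : k + 1 < m)
    (f g : Fin m → Fin n) :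
    (site n m A k * M) f g
      = ∑ x : Fin n, ∑ y : Fin n,
          A (f ⟨k, Nat.lt_of_succ_lt hk⟩, f ⟨k + 1, hk⟩) (x, y) *
            M (upd n m k hk f x y) g := by
  rw [Matrix.mul_apply]
  have step1 : ∀ h : Fin m → Fin n, site n m A k f h * M h g
      = (if upd n m k hk f (h ⟨k, Nat.lt_of_succ_lt hk⟩) (h ⟨k + 1, hk⟩) = h
          then (1 : ℂ) else 0) *
        (A (f ⟨k, Nat.lt_of_succ_lt hk⟩, f ⟨k + 1, hk⟩)
          (h ⟨k, Nat.lt_of_succ_lt hk⟩, h ⟨k + 1, hk⟩) * M h g) := by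
    intro h
    rw [site_apply A k hk, if_congr (cond_iff k hk f h) rfl rfl]
    ring
  rw [Finset.sum_congr rfl (fun h _ => step1 h), sum_upd k hk f]
  apply Finset.sum_congr rfl
  intro x _
  apply Finset.sum_congr rfl
  intro y _
  rw [upd_a, upd_b]

lemma mul_site_apply (A : Matrix (Fin n × Fin n) (Fin n × Fin n) ℂ)
    (M : Matrix (Fin m → Fin n) (Fin m → Fin n) ℂ) (k : ℕ) (hk : k + 1 < m)
    (f g : Fin m → Fin n) :
    (M * site n m A k) f g
      = ∑ x : Fin n, ∑ y : Fin n,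
          M f (upd n m k hk g x y) *
            A (x, y) (g ⟨k, Nat.lt_of_succ_lt hk⟩, g ⟨k + 1, hk⟩) := by
  rw [Matrix.mul_apply]
  have hc : ∀ h : Fin m → Fin n,
      (∀ t : Fin m, (t : ℕ) = k ∨ (t : ℕ) = k + 1 ∨ h t = g t)
        ↔ upd n m k hk g (h ⟨k, Nat.lt_of_succ_lt hk⟩) (h ⟨k + 1, hk⟩) = h := by
    intro h
    rw [← cond_iff k hk g h]
    constructor <;>
      · intro hc t
        rcases hc t with h1 | h2 | h3
        · exact Or.inl h1
        · exact Or.inr (Or.inl h2)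
        · exact Or.inr (Or.inr h3.symm)
  have step1 : ∀ h : Fin m → Fin n, M f h * site n m A k h g
      = (if upd n m k hk g (h ⟨k, Nat.lt_of_succ_lt hk⟩) (h ⟨k + 1, hk⟩) = h
          then (1 : ℂ) else 0) *
        (M f h * A (h ⟨k, Nat.lt_of_succ_lt hk⟩, h ⟨k + 1, hk⟩)
          (g ⟨k, Nat.lt_of_succ_lt hk⟩, g ⟨k + 1, hk⟩)) := by
    intro h
    rw [site_apply A k hk, if_congr (hc h) rfl rfl]
    ring
  rw [Finset.sum_congr rfl (fun h _ => step1 h), sum_upd k hk g]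
  apply Finset.sum_congr rfl
  intro x _
  apply Finset.sum_congr rfl
  intro y _
  rw [upd_a, upd_b]

end Stmt15Aux

namespace Stmt15Aux

variable {n m : ℕ}

lemma collapse2 (u v : Fin n) (c : ℂ) :
    (∑ x : Fin n, ∑ y : Fin n, if x = u then (if y = v then c else 0) else 0)
      = c := by
  have inner : ∀ x : Fin n,
      (∑ y : Fin n, if x = u then (if y = v then c else 0) else 0)
        = if x = u then c else 0 := by
    intro x
    by_cases hx : x = u
    · simp [hx, Finset.sum_ite_eq']
    · simp [hx]
  rw [Finset.sum_congr rfl fun x _ => inner x]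
  simp [Finset.sum_ite_eq']

lemma site_comm (A B : Matrix (Fin n × Fin n) (Fin n × Fin n) ℂ) (k l : ℕ)
    (hkl : k + 2 ≤ l) :
    site n m A k * site n m B l = site n m B l * site n m A k := by
  by_cases hl : l + 1 < m
  · have hk : k + 1 < m := by omega
    have hkm : k < m := by omega
    have hlm : l < m := by omega
    ext f g
    rw [site_mul_apply A (site n m B l) k hk f g,
      mul_site_apply A (site n m B l) k hk f g]
    set ak : Fin m := ⟨k, hkm⟩ with hak
    set bk : Fin m := ⟨k + 1, hk⟩ with hbk
    set al : Fin m := ⟨l, hlm⟩ with hal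
    set bl : Fin m := ⟨l + 1, hl⟩ with hbl
    have vak : (ak : ℕ) = k := rfl
    have vbk : (bk : ℕ) = k + 1 := rfl
    have val : (al : ℕ) = l := rfl
    have vbl : (bl : ℕ) = l + 1 := rfl
    set D4 : Prop := ∀ t : Fin m,
      (t : ℕ) = k ∨ (t : ℕ) = k + 1 ∨ (t : ℕ) = l ∨ (t : ℕ) = l + 1 ∨ f t = g t
      with hD4
    set c : ℂ := A (f ak, f bk) (g ak, g bk) * B (f al, f bl) (g al, g bl) *
      (if D4 then (1 : ℂ) else 0) with hc
    have lhs_eq : (∑ x : Fin n, ∑ y : Fin n,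
        A (f ak, f bk) (x, y) * site n m B l (upd n m k hk f x y) g) = c := by
      have step : ∀ x y : Fin n,
          A (f ak, f bk) (x, y) * site n m B l (upd n m k hk f x y) g
          = if x = g ak then (if y = g bk then c else 0) else 0 := by
        intro x y
        rw [site_apply B l hl]
        have e1 : upd n m k hk f x y al = f al :=
          upd_ne _ _ _ _ _ al (by omega) (by omega)
        have e2 : upd n m k hk f x y bl = f bl :=
          upd_ne _ _ _ _ _ bl (by omega) (by omega)
        rw [e1, e2]
        have hiff : (∀ t : Fin m, (t : ℕ) = l ∨ (t : ℕ) = l + 1 ∨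
              upd n m k hk f x y t = g t)
            ↔ (x = g ak ∧ y = g bk ∧ D4) := by
          constructor
          · intro hcc
            have h1 := hcc ak
            rw [upd_a] at h1
            have h2 := hcc bk
            rw [upd_b] at h2
            refine ⟨?_, ?_, ?_⟩
            · rcases h1 with h | h | h
              exacts [absurd h (by omega), absurd h (by omega), h]
            · rcases h2 with h | h | h
              exacts [absurd h (by omega), absurd h (by omega), h]
            intro t
            by_cases t1 : (t : ℕ) = k
            · exact Or.inl t1
            · by_cases t2 : (t : ℕ) = k + 1
              · exact Or.inr (Or.inl t2)
              · rcases hcc t with h | h | h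
                · exact Or.inr (Or.inr (Or.inl h))
                · exact Or.inr (Or.inr (Or.inr (Or.inl h)))
                · rw [upd_ne _ _ _ _ _ t t1 t2] at h
                  exact Or.inr (Or.inr (Or.inr (Or.inr h)))
          · rintro ⟨hx, hy, hD⟩ t
            by_cases t1 : (t : ℕ) = k
            · have ht : t = ak := Fin.ext t1
              rw [ht, upd_a, hx]
              exact Or.inr (Or.inr rfl)
            · by_cases t2 : (t : ℕ) = k + 1
              · have ht : t = bk := Fin.ext t2
                rw [ht, upd_b, hy]
                exact Or.inr (Or.inr rfl)
              · rcases hD t with h | h | h | h | h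
                · exact absurd h t1
                · exact absurd h t2
                · exact Or.inl h
                · exact Or.inr (Or.inl h)
                · rw [upd_ne _ _ _ _ _ t t1 t2]
                  exact Or.inr (Or.inr h)
        rw [if_congr hiff rfl rfl]
        by_cases hx : x = g ak
        · by_cases hy : y = g bk
          · by_cases hD : D4
            · rw [if_pos ⟨hx, hy, hD⟩, if_pos hx, if_pos hy, hc, if_pos hD, hx, hy]
              ring
            · rw [if_neg (by tauto), if_pos hx, if_pos hy, hc, if_neg hD]
              ring
          · rw [if_neg (by tauto), if_pos hx, if_neg hy]
            ring
        · rw [if_neg (by tauto), if_neg hx]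
          ring
      rw [Finset.sum_congr rfl (fun x _ => Finset.sum_congr rfl (fun y _ => step x y))]
      exact collapse2 _ _ _
    have rhs_eq : (∑ x : Fin n, ∑ y : Fin n,
        site n m B l f (upd n m k hk g x y) * A (x, y) (g ak, g bk)) = c := by
      have step : ∀ x y : Fin n,
          site n m B l f (upd n m k hk g x y) * A (x, y) (g ak, g bk)
          = if x = f ak then (if y = f bk then c else 0) else 0 := by
        intro x y
        rw [site_apply B l hl]
        have e1 : upd n m k hk g x y al = g al :=
          upd_ne _ _ _ _ _ al (by omega) (by omega)
        have e2 : upd n m k hk g x y bl = g bl :=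
          upd_ne _ _ _ _ _ bl (by omega) (by omega)
        rw [e1, e2]
        have hiff : (∀ t : Fin m, (t : ℕ) = l ∨ (t : ℕ) = l + 1 ∨
              f t = upd n m k hk g x y t)
            ↔ (x = f ak ∧ y = f bk ∧ D4) := by
          constructor
          · intro hcc
            have h1 := hcc ak
            rw [upd_a] at h1
            have h2 := hcc bk
            rw [upd_b] at h2
            refine ⟨?_, ?_, ?_⟩
            · rcases h1 with h | h | h
              exacts [absurd h (by omega), absurd h (by omega), h.symm]
            · rcases h2 with h | h | h
              exacts [absurd h (by omega), absurd h (by omega), h.symm]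
            intro t
            by_cases t1 : (t : ℕ) = k
            · exact Or.inl t1
            · by_cases t2 : (t : ℕ) = k + 1
              · exact Or.inr (Or.inl t2)
              · rcases hcc t with h | h | h
                · exact Or.inr (Or.inr (Or.inl h))
                · exact Or.inr (Or.inr (Or.inr (Or.inl h)))
                · rw [upd_ne _ _ _ _ _ t t1 t2] at h
                  exact Or.inr (Or.inr (Or.inr (Or.inr h)))
          · rintro ⟨hx, hy, hD⟩ t
            by_cases t1 : (t : ℕ) = k
            · have ht : t = ak := Fin.ext t1
              rw [ht, upd_a, hx]
              exact Or.inr (Or.inr rfl)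
            · by_cases t2 : (t : ℕ) = k + 1
              · have ht : t = bk := Fin.ext t2
                rw [ht, upd_b, hy]
                exact Or.inr (Or.inr rfl)
              · rcases hD t with h | h | h | h | h
                · exact absurd h t1
                · exact absurd h t2
                · exact Or.inl h
                · exact Or.inr (Or.inl h)
                · rw [upd_ne _ _ _ _ _ t t1 t2]
                  exact Or.inr (Or.inr h)
        rw [if_congr hiff rfl rfl]
        by_cases hx : x = f ak
        · by_cases hy : y = f bk
          · by_cases hD : D4
            · rw [if_pos ⟨hx, hy, hD⟩, if_pos hx, if_pos hy, hc, if_pos hD, hx, hy]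
              ring
            · rw [if_neg (by tauto), if_pos hx, if_pos hy, hc, if_neg hD]
              ring
          · rw [if_neg (by tauto), if_pos hx, if_neg hy]
            ring
        · rw [if_neg (by tauto), if_neg hx]
          ring
      rw [Finset.sum_congr rfl (fun x _ => Finset.sum_congr rfl (fun y _ => step x y))]
      exact collapse2 _ _ _
    rw [lhs_eq, rhs_eq]
  · rw [site_not B l hl, mul_one, one_mul]

end Stmt15Aux

namespace Stmt15Aux

variable {n m : ℕ}

lemma sum_rot (F : Fin n → Fin n → Fin n → ℂ) :
    (∑ x : Fin n, ∑ y : Fin n, ∑ z : Fin n, F x y z)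
      = ∑ z : Fin n, ∑ x : Fin n, ∑ y : Fin n, F x y z := by
  rw [Finset.sum_congr rfl fun x _ => Finset.sum_comm]
  exact Finset.sum_comm

lemma qybe_entry (R : Fin n → Fin n → Fin n → Fin n → ℂ) (hR : QYBE n R)
    (a b c g h i : Fin n) :
    (∑ x : Fin n, ∑ x1 : Fin n, ∑ x2 : Fin n,
        R a x2 b x * R x2 g c x1 * R x h x1 i)
      = ∑ x : Fin n, ∑ x1 : Fin n, ∑ x2 : Fin n,
          R b x1 c x2 * R a x x2 i * R x g x1 h := by
  have h0 : (Rmat12 n R * Rmat13 n R * Rmat23 n R) (a, b, c) (g, h, i)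
      = (Rmat23 n R * Rmat13 n R * Rmat12 n R) (a, b, c) (g, h, i) := by rw [hR]
  simp only [Matrix.mul_apply, Rmat12, Rmat13, Rmat23, Matrix.of_apply,
    Fintype.sum_prod_type, ite_mul, mul_ite, zero_mul, mul_zero, one_mul,
    mul_one, Finset.sum_ite_irrel, Finset.sum_const_zero, Finset.sum_mul,
    Finset.mul_sum, Finset.sum_ite_eq, Finset.sum_ite_eq', Finset.mem_univ,
    if_true] at h0
  exact h0

lemma braid_scalar (R : Fin n → Fin n → Fin n → Fin n → ℂ) (hR : QYBE n R)
    (u1 u2 u3 v1 v2 v3 : Fin n) :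
    (∑ x1 : Fin n, ∑ y1 : Fin n, ∑ x2 : Fin n,
        R u2 x1 u1 y1 * R u3 x2 y1 v3 * R x2 v1 x1 v2)
      = ∑ x1 : Fin n, ∑ y1 : Fin n, ∑ y2 : Fin n,
          R u3 x1 u2 y1 * R x1 v1 u1 y2 * R y1 v2 y2 v3 := by
  have h0 := qybe_entry R hR u3 u2 u1 v1 v2 v3
  have e1 : (∑ x1 : Fin n, ∑ y1 : Fin n, ∑ x2 : Fin n,
      R u2 x1 u1 y1 * R u3 x2 y1 v3 * R x2 v1 x1 v2)
      = ∑ x : Fin n, ∑ x1 : Fin n, ∑ x2 : Fin n,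
          R u2 x1 u1 x2 * R u3 x x2 v3 * R x v1 x1 v2 :=
    sum_rot (fun x y z => R u2 x u1 y * R u3 z y v3 * R z v1 x v2)
  have e2 : (∑ x : Fin n, ∑ x1 : Fin n, ∑ x2 : Fin n,
      R u3 x2 u2 x * R x2 v1 u1 x1 * R x v2 x1 v3)
      = ∑ x1 : Fin n, ∑ y1 : Fin n, ∑ y2 : Fin n,
          R u3 x1 u2 y1 * R x1 v1 u1 y2 * R y1 v2 y2 v3 :=
    sum_rot (fun a b c => R u3 c u2 a * R c v1 u1 b * R a v2 b v3)
  exact e1.trans (h0.symm.trans e2)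

lemma site_braid (R : Fin n → Fin n → Fin n → Fin n → ℂ) (hR : QYBE n R)
    (k : ℕ) (hm2 : k + 1 + 1 + 1 ≤ m) :
    site n m (PRmat n R) k * (site n m (PRmat n R) (k + 1) * site n m (PRmat n R) k)
      = site n m (PRmat n R) (k + 1) *
          (site n m (PRmat n R) k * site n m (PRmat n R) (k + 1)) := by
  set Q := PRmat n R with hQ
  have hk : k + 1 < m := by omega
  have hk2 : k + 1 + 1 < m := by omega
  have hkm : k < m := by omega
  ext f g
  set ak : Fin m := ⟨k, hkm⟩ with hak
  set bk : Fin m := ⟨k + 1, hk⟩ with hbk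
  set ck : Fin m := ⟨k + 1 + 1, hk2⟩ with hck
  have vak : (ak : ℕ) = k := rfl
  have vbk : (bk : ℕ) = k + 1 := rfl
  have vck : (ck : ℕ) = k + 1 + 1 := rfl
  set D3 : Prop := ∀ t : Fin m,
    (t : ℕ) = k ∨ (t : ℕ) = k + 1 ∨ (t : ℕ) = k + 1 + 1 ∨ f t = g t with hD3def
  -- left side
  have expandL : ∀ x1 y1 : Fin n,
      (site n m Q (k + 1) * site n m Q k) (upd n m k hk f x1 y1) g
        = ∑ x2 : Fin n, Q (y1, f ck) (x2, g ck) *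
            (Q (x1, x2) (g ak, g bk) * (if D3 then (1 : ℂ) else 0)) := by
    intro x1 y1
    rw [site_mul_apply Q (site n m Q k) (k + 1) hk2]
    have eb : upd n m k hk f x1 y1 ⟨k + 1, Nat.lt_of_succ_lt hk2⟩ = y1 := upd_b _ _ _ _ _ _
    have ec : upd n m k hk f x1 y1 ⟨k + 1 + 1, hk2⟩ = f ck :=
      upd_ne _ _ _ _ _ _ (by omega) (by omega)
    rw [eb, ec]
    have step : ∀ x2 y2 : Fin n,
        Q (y1, f ck) (x2, y2) *
          site n m Q k (upd n m (k + 1) hk2 (upd n m k hk f x1 y1) x2 y2) g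
        = if y2 = g ck then
            (Q (y1, f ck) (x2, g ck) *
              (Q (x1, x2) (g ak, g bk) * (if D3 then (1 : ℂ) else 0))) else 0 := by
      intro x2 y2
      rw [site_apply Q k hk]
      set h' := upd n m (k + 1) hk2 (upd n m k hk f x1 y1) x2 y2 with hh'
      have ea' : h' ⟨k, Nat.lt_of_succ_lt hk⟩ = x1 := by
        rw [hh', upd_ne _ _ _ _ _ _ (by omega) (by omega), upd_a]
      have eb' : h' ⟨k + 1, hk⟩ = x2 := by
        rw [hh', upd_a]
      have ec' : h' ck = y2 := by
        rw [hh']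
        exact upd_b _ _ _ _ _ _
      rw [ea', eb']
      have hiff : (∀ t : Fin m, (t : ℕ) = k ∨ (t : ℕ) = k + 1 ∨ h' t = g t)
          ↔ (y2 = g ck ∧ D3) := by
        constructor
        · intro hcc
          have h3 := hcc ck
          rw [ec'] at h3
          refine ⟨?_, ?_⟩
          · rcases h3 with h | h | h
            exacts [absurd h (by omega), absurd h (by omega), h]
          intro t
          by_cases t3 : (t : ℕ) = k + 1 + 1
          · exact Or.inr (Or.inr (Or.inl t3))
          · rcases hcc t with h | h | h
            · exact Or.inl h
            · exact Or.inr (Or.inl h)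
            · by_cases t1 : (t : ℕ) = k
              · exact Or.inl t1
              · by_cases t2 : (t : ℕ) = k + 1
                · exact Or.inr (Or.inl t2)
                · rw [hh', upd_ne _ _ _ _ _ _ (by omega) (by omega),
                    upd_ne _ _ _ _ _ _ t1 t2] at h
                  exact Or.inr (Or.inr (Or.inr h))
        · rintro ⟨hy2, hD⟩ t
          by_cases t1 : (t : ℕ) = k
          · exact Or.inl t1
          · by_cases t2 : (t : ℕ) = k + 1
            · exact Or.inr (Or.inl t2)
            · refine Or.inr (Or.inr ?_)
              by_cases t3 : (t : ℕ) = k + 1 + 1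
              · have ht : t = ck := Fin.ext t3
                rw [ht, ec', hy2]
              · rw [hh', upd_ne _ _ _ _ _ _ (by omega) (by omega),
                  upd_ne _ _ _ _ _ _ t1 t2]
                rcases hD t with h | h | h | h
                · exact absurd h t1
                · exact absurd h t2
                · exact absurd h t3
                · exact h
      rw [if_congr hiff rfl rfl]
      by_cases hy2 : y2 = g ck
      · by_cases hD : D3
        · rw [if_pos ⟨hy2, hD⟩, if_pos hy2, if_pos hD, hy2]
        · rw [if_neg (by tauto), if_pos hy2, if_neg hD]
          ring
      · rw [if_neg (by tauto), if_neg hy2]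
        ring
    rw [Finset.sum_congr rfl (fun x2 _ => Finset.sum_congr rfl (fun y2 _ => step x2 y2))]
    apply Finset.sum_congr rfl
    intro x2 _
    simp [Finset.sum_ite_eq']
  -- right side
  have expandR : ∀ x1 y1 : Fin n,
      (site n m Q k * site n m Q (k + 1)) (upd n m (k + 1) hk2 f x1 y1) g
        = ∑ y2 : Fin n, Q (f ak, x1) (g ak, y2) *
            (Q (y2, y1) (g bk, g ck) * (if D3 then (1 : ℂ) else 0)) := by
    intro x1 y1
    rw [site_mul_apply Q (site n m Q (k + 1)) k hk]
    have ea : upd n m (k + 1) hk2 f x1 y1 ⟨k, Nat.lt_of_succ_lt hk⟩ = f ak :=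
      upd_ne _ _ _ _ _ _ (by omega) (by omega)
    have eb : upd n m (k + 1) hk2 f x1 y1 ⟨k + 1, hk⟩ = x1 := upd_a _ _ _ _ _ _
    rw [ea, eb]
    have step : ∀ x2 y2 : Fin n,
        Q (f ak, x1) (x2, y2) *
          site n m Q (k + 1) (upd n m k hk (upd n m (k + 1) hk2 f x1 y1) x2 y2) g
        = if x2 = g ak then
            (Q (f ak, x1) (g ak, y2) *
              (Q (y2, y1) (g bk, g ck) * (if D3 then (1 : ℂ) else 0))) else 0 := by
      intro x2 y2
      rw [site_apply Q (k + 1) hk2]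
      set h' := upd n m k hk (upd n m (k + 1) hk2 f x1 y1) x2 y2 with hh'
      have ea' : h' ⟨k, Nat.lt_of_succ_lt hk⟩ = x2 := by
        rw [hh', upd_a]
      have eb' : h' ⟨k + 1, Nat.lt_of_succ_lt hk2⟩ = y2 := by
        rw [hh']
        exact upd_b _ _ _ _ _ _
      have ec' : h' ⟨k + 1 + 1, hk2⟩ = y1 := by
        rw [hh', upd_ne _ _ _ _ _ _ (by omega) (by omega)]
        exact upd_b _ _ _ _ _ _
      rw [eb', ec']
      have hiff : (∀ t : Fin m, (t : ℕ) = k + 1 ∨ (t : ℕ) = k + 1 + 1 ∨ h' t = g t)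
          ↔ (x2 = g ak ∧ D3) := by
        constructor
        · intro hcc
          have h3 := hcc ak
          rw [ea'] at h3
          refine ⟨?_, ?_⟩
          · rcases h3 with h | h | h
            exacts [absurd h (by omega), absurd h (by omega), h]
          intro t
          by_cases t1 : (t : ℕ) = k
          · exact Or.inl t1
          · rcases hcc t with h | h | h
            · exact Or.inr (Or.inl h)
            · exact Or.inr (Or.inr (Or.inl h))
            · by_cases t2 : (t : ℕ) = k + 1
              · exact Or.inr (Or.inl t2)
              · by_cases t3 : (t : ℕ) = k + 1 + 1
                · exact Or.inr (Or.inr (Or.inl t3))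
                · rw [hh', upd_ne _ _ _ _ _ _ t1 t2,
                    upd_ne _ _ _ _ _ _ t2 t3] at h
                  exact Or.inr (Or.inr (Or.inr h))
        · rintro ⟨hx2, hD⟩ t
          by_cases t2 : (t : ℕ) = k + 1
          · exact Or.inl t2
          · by_cases t3 : (t : ℕ) = k + 1 + 1
            · exact Or.inr (Or.inl t3)
            · refine Or.inr (Or.inr ?_)
              by_cases t1 : (t : ℕ) = k
              · have ht : t = ak := Fin.ext t1
                rw [ht, ea', hx2]
              · rw [hh', upd_ne _ _ _ _ _ _ t1 t2, upd_ne _ _ _ _ _ _ t2 t3]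
                rcases hD t with h | h | h | h
                · exact absurd h t1
                · exact absurd h t2
                · exact absurd h t3
                · exact h
      rw [if_congr hiff rfl rfl]
      by_cases hx2 : x2 = g ak
      · by_cases hD : D3
        · rw [if_pos ⟨hx2, hD⟩, if_pos hx2, if_pos hD, hx2]
        · rw [if_neg (by tauto), if_pos hx2, if_neg hD]
          ring
      · rw [if_neg (by tauto), if_neg hx2]
        ring
    rw [Finset.sum_congr rfl (fun x2 _ => Finset.sum_congr rfl (fun y2 _ => step x2 y2))]
    have inner : ∀ x2 : Fin n,
        (∑ y2 : Fin n, if x2 = g ak then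
          (Q (f ak, x1) (g ak, y2) *
            (Q (y2, y1) (g bk, g ck) * (if D3 then (1 : ℂ) else 0))) else 0)
          = if x2 = g ak then
              (∑ y2 : Fin n, Q (f ak, x1) (g ak, y2) *
                (Q (y2, y1) (g bk, g ck) * (if D3 then (1 : ℂ) else 0))) else 0 := by
      intro x2
      by_cases hx2 : x2 = g ak <;> simp [hx2]
    rw [Finset.sum_congr rfl (fun x2 _ => inner x2)]
    simp [Finset.sum_ite_eq']
  -- assemble
  have L : (site n m Q k * (site n m Q (k + 1) * site n m Q k)) f g
      = ∑ x1 : Fin n, ∑ y1 : Fin n, Q (f ak, f bk) (x1, y1) *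
          (∑ x2 : Fin n, Q (y1, f ck) (x2, g ck) *
            (Q (x1, x2) (g ak, g bk) * (if D3 then (1 : ℂ) else 0))) := by
    rw [site_mul_apply Q (site n m Q (k + 1) * site n m Q k) k hk f g]
    exact Finset.sum_congr rfl (fun x1 _ => Finset.sum_congr rfl (fun y1 _ => by
      rw [expandL x1 y1]))
  have Rr : (site n m Q (k + 1) * (site n m Q k * site n m Q (k + 1))) f g
      = ∑ x1 : Fin n, ∑ y1 : Fin n, Q (f bk, f ck) (x1, y1) *
          (∑ y2 : Fin n, Q (f ak, x1) (g ak, y2) *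
            (Q (y2, y1) (g bk, g ck) * (if D3 then (1 : ℂ) else 0))) := by
    rw [site_mul_apply Q (site n m Q k * site n m Q (k + 1)) (k + 1) hk2 f g]
    exact Finset.sum_congr rfl (fun x1 _ => Finset.sum_congr rfl (fun y1 _ => by
      rw [expandR x1 y1]))
  rw [L, Rr]
  by_cases hD : D3
  · simp only [if_pos hD, mul_one]
    have qent : ∀ p1 p2 q1 q2 : Fin n, Q (p1, p2) (q1, q2) = R p2 q1 p1 q2 := by
      intro p1 p2 q1 q2
      rw [hQ, PRmat]
      rfl
    simp only [qent, Finset.mul_sum, ← mul_assoc]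
    exact braid_scalar R hR (f ak) (f bk) (f ck) (g ak) (g bk) (g ck)
  · simp only [if_neg hD, mul_zero, Finset.mul_sum, Finset.sum_const_zero]

end Stmt15Aux

namespace Stmt15Aux

variable {n m : ℕ}

lemma chain_zero (A : Matrix (Fin n × Fin n) (Fin n × Fin n) ℂ) (off : ℕ) :
    chain n m A off 0 = 1 := by
  simp [chain]

lemma chain_succ_right (A : Matrix (Fin n × Fin n) (Fin n × Fin n) ℂ)
    (off r : ℕ) :
    chain n m A off (r + 1) = chain n m A off r * site n m A (off + r) := by
  rw [chain, chain, List.range_succ, List.map_append, List.prod_append]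
  simp

lemma chain_succ_left (A : Matrix (Fin n × Fin n) (Fin n × Fin n) ℂ)
    (off r : ℕ) :
    chain n m A off (r + 1) = site n m A off * chain n m A (off + 1) r := by
  rw [chain, chain, List.range_succ_eq_map, List.map_cons, List.prod_cons,
    List.map_map]
  refine congrArg₂ (· * ·) (by rw [Nat.add_zero]) ?_
  refine congrArg List.prod (List.map_congr_left ?_)
  intro s _
  simp only [Function.comp_apply]
  exact congrArg (site n m A) (by omega)

lemma chain_add (A : Matrix (Fin n × Fin n) (Fin n × Fin n) ℂ)
    (off r s : ℕ) :
    chain n m A off (r + s) = chain n m A off r * chain n m A (off + r) s := by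
  induction s with
  | zero => rw [chain_zero, mul_one]; exact congrArg (chain n m A off) (by omega)
  | succ s ih =>
      rw [show r + (s + 1) = (r + s) + 1 from rfl, chain_succ_right, ih,
        chain_succ_right, mul_assoc, show off + r + s = off + (r + s) from by omega]

lemma site_chain_comm (A B : Matrix (Fin n × Fin n) (Fin n × Fin n) ℂ)
    (q off : ℕ) : ∀ r : ℕ,
    (∀ s, s < r →
      site n m B q * site n m A (off + s) = site n m A (off + s) * site n m B q) →
    site n m B q * chain n m A off r = chain n m A off r * site n m B q := by
  intro r
  induction r with
  | zero =>
      intro _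
      rw [chain_zero, mul_one, one_mul]
  | succ r ih =>
      intro hcomm
      rw [chain_succ_right, ← mul_assoc, ih (fun s hs => hcomm s (by omega)),
        mul_assoc, hcomm r (by omega), ← mul_assoc]

/-- shift lemma: σ_{p+1} L = L σ_p -/
lemma shift (R : Fin n → Fin n → Fin n → Fin n → ℂ) (hR : QYBE n R)
    (off ℓ p : ℕ) (hp1 : off ≤ p) (hp2 : p + 2 ≤ off + ℓ) (hm : off + ℓ < m) :
    site n m (PRmat n R) (p + 1) * chain n m (PRmat n R) off ℓ
      = chain n m (PRmat n R) off ℓ * site n m (PRmat n R) p := by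
  obtain ⟨c, hc⟩ : ∃ c, p = off + c := ⟨p - off, by omega⟩
  have hd : ℓ = c + ((off + ℓ - (p + 2)) + 1 + 1) := by omega
  set d := off + ℓ - (p + 2) with hdd
  set σ := PRmat n R with hσ
  have hsplit : chain n m σ off ℓ
      = chain n m σ off c *
          (site n m σ p * (site n m σ (p + 1) * chain n m σ (p + 2) d)) := by
    rw [hd, chain_add, chain_succ_left, chain_succ_left]
    rw [hc]
  have h1 : site n m σ (p + 1) * chain n m σ off c
      = chain n m σ off c * site n m σ (p + 1) := by
    apply site_chain_comm
    intro s hs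
    exact (site_comm σ σ (off + s) (p + 1) (by omega)).symm
  have h3 : site n m σ p * chain n m σ (p + 2) d
      = chain n m σ (p + 2) d * site n m σ p := by
    apply site_chain_comm
    intro s hs
    exact site_comm σ σ p (p + 2 + s) (by omega)
  have h2 := site_braid (n := n) (m := m) R hR p (by omega)
  rw [hsplit]
  set a := chain n m σ off c
  set s0 := site n m σ p
  set s1 := site n m σ (p + 1)
  set e := chain n m σ (p + 2) d
  calc s1 * (a * (s0 * (s1 * e)))
      = (s1 * a) * (s0 * (s1 * e)) := by rw [mul_assoc]
    _ = (a * s1) * (s0 * (s1 * e)) := by rw [h1]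
    _ = a * ((s1 * (s0 * s1)) * e) := by
        rw [mul_assoc, ← mul_assoc s0 s1 e, ← mul_assoc s1 (s0 * s1) e]
    _ = a * ((s0 * (s1 * s0)) * e) := by rw [← h2]
    _ = a * (s0 * (s1 * (s0 * e))) := by
        rw [mul_assoc s0 (s1 * s0) e, mul_assoc s1 s0 e]
    _ = a * (s0 * (s1 * (e * s0))) := by rw [h3]
    _ = (a * (s0 * (s1 * e))) * s0 := by
        rw [← mul_assoc s1 e s0, ← mul_assoc s0 (s1 * e) s0,
          ← mul_assoc a (s0 * (s1 * e)) s0]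

lemma chain_shift (R : Fin n → Fin n → Fin n → Fin n → ℂ) (hR : QYBE n R)
    (off ℓ : ℕ) (hm : off + ℓ < m) (q r : ℕ) (hq : off ≤ q) :
    q + r + 1 ≤ off + ℓ →
    chain n m (PRmat n R) (q + 1) r * chain n m (PRmat n R) off ℓ
      = chain n m (PRmat n R) off ℓ * chain n m (PRmat n R) q r := by
  induction r with
  | zero =>
      intro _
      rw [chain_zero, chain_zero, mul_one, one_mul]
  | succ r ih =>
      intro hqr
      rw [chain_succ_right, chain_succ_right]
      have hsite : site n m (PRmat n R) (q + 1 + r)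
          = site n m (PRmat n R) (q + r + 1) :=
        congrArg (site n m (PRmat n R)) (by omega)
      rw [hsite, mul_assoc,
        shift R hR off ℓ (q + r) (by omega) (by omega) hm,
        ← mul_assoc, ih (by omega), mul_assoc]

lemma int_shift (R : Fin n → Fin n → Fin n → Fin n → ℂ) (hR : QYBE n R)
    (off ℓ : ℕ) (hm : off + ℓ < m) (q k : ℕ) (hq : off ≤ q)
    (hqk : q + k ≤ off + ℓ) :
    braidedInt n m R (q + 1) k * chain n m (PRmat n R) off ℓ
      = chain n m (PRmat n R) off ℓ * braidedInt n m R q k := by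
  rw [braidedInt, braidedInt, Finset.sum_mul, Finset.mul_sum]
  apply Finset.sum_congr rfl
  intro r hr
  have hrk : r < k := Finset.mem_range.mp hr
  exact chain_shift R hR off ℓ hm q r hq (by omega)

/-- windowed braided factorial -/
def Fact (n m : ℕ) (R : Fin n → Fin n → Fin n → Fin n → ℂ) :
    ℕ → ℕ → Matrix (Fin m → Fin n) (Fin m → Fin n) ℂ
  | _, 0 => 1
  | off, k + 1 => Fact n m R (off + 1) k * braidedInt n m R off (k + 1)

lemma Fact_zero (R : Fin n → Fin n → Fin n → Fin n → ℂ) (off : ℕ) :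
    Fact n m R off 0 = 1 := rfl

lemma Fact_succ (R : Fin n → Fin n → Fin n → Fin n → ℂ) (off k : ℕ) :
    Fact n m R off (k + 1) = Fact n m R (off + 1) k * braidedInt n m R off (k + 1) :=
  rfl

lemma fact_shift (R : Fin n → Fin n → Fin n → Fin n → ℂ) (hR : QYBE n R)
    (off ℓ : ℕ) (hm : off + ℓ < m) (j : ℕ) :
    ∀ q, off ≤ q → q + j ≤ off + ℓ →
    Fact n m R (q + 1) j * chain n m (PRmat n R) off ℓ
      = chain n m (PRmat n R) off ℓ * Fact n m R q j := by
  induction j with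
  | zero =>
      intro q _ _
      rw [Fact_zero, Fact_zero, mul_one, one_mul]
  | succ j ih =>
      intro q hq hqj
      rw [Fact_succ, Fact_succ, mul_assoc,
        int_shift R hR off ℓ hm q (j + 1) hq (by omega),
        ← mul_assoc, ih (q + 1) (by omega) (by omega), mul_assoc]

/-- the "opposite-ordered" braided integer ∑ chains ending at the right -/
def Vee (n m : ℕ) (R : Fin n → Fin n → Fin n → Fin n → ℂ) (off k : ℕ) :
    Matrix (Fin m → Fin n) (Fin m → Fin n) ℂ :=
  ∑ r ∈ Finset.range k, chain n m (PRmat n R) (off + k - (r + 1)) r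

lemma braidedInt_one (R : Fin n → Fin n → Fin n → Fin n → ℂ) (off : ℕ) :
    braidedInt n m R off 1 = 1 := by
  rw [braidedInt, Finset.sum_range_one, chain_zero]

lemma Vee_one (R : Fin n → Fin n → Fin n → Fin n → ℂ) (off : ℕ) :
    Vee n m R off 1 = 1 := by
  rw [Vee, Finset.sum_range_one, chain_zero]

lemma Vee_succ (R : Fin n → Fin n → Fin n → Fin n → ℂ) (off k : ℕ) :
    Vee n m R off (k + 1) = Vee n m R (off + 1) k + chain n m (PRmat n R) off k := by
  rw [Vee, Vee, Finset.sum_range_succ]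
  congr 1
  · apply Finset.sum_congr rfl
    intro r hr
    have hrk := Finset.mem_range.mp hr
    rw [show off + (k + 1) - (r + 1) = off + 1 + k - (r + 1) from by omega]
  · rw [show off + (k + 1) - (k + 1) = off from by omega]

lemma factB (R : Fin n → Fin n → Fin n → Fin n → ℂ) (hR : QYBE n R) (j : ℕ) :
    ∀ off, off + (j + 1) ≤ m →
      Fact n m R off (j + 1) = Vee n m R off (j + 1) * Fact n m R off j := by
  induction j with
  | zero =>
      intro off _
      rw [Fact_succ, Fact_zero, braidedInt_one, Vee_one, Fact_zero]
  | succ i ih =>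
      intro off hoff
      have hbint : braidedInt n m R off (i + 1 + 1)
          = braidedInt n m R off (i + 1) + chain n m (PRmat n R) off (i + 1) := by
        rw [braidedInt, braidedInt, Finset.sum_range_succ]
      rw [Fact_succ, hbint, mul_add]
      rw [fact_shift R hR off (i + 1) (by omega) (i + 1) off (le_refl off) (by omega)]
      rw [ih (off + 1) (by omega), mul_assoc, ← Fact_succ]
      rw [Vee_succ R off (i + 1), add_mul]

end Stmt15Aux

namespace Stmt15Aux

variable {n m : ℕ}

/-- index-transposed array: R' i j k l = R j i l k -/
def sArr (n : ℕ) (R : Fin n → Fin n → Fin n → Fin n → ℂ) :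
    Fin n → Fin n → Fin n → Fin n → ℂ :=
  fun i j k l => R j i l k

lemma Rmat12_sArr (R : Fin n → Fin n → Fin n → Fin n → ℂ) :
    Rmat12 n (sArr n R) = (Rmat12 n R).transpose := by
  ext p q
  simp only [Rmat12, sArr, Matrix.transpose_apply, Matrix.of_apply]
  congr 1
  exact if_congr eq_comm rfl rfl

lemma Rmat13_sArr (R : Fin n → Fin n → Fin n → Fin n → ℂ) :
    Rmat13 n (sArr n R) = (Rmat13 n R).transpose := by
  ext p q
  simp only [Rmat13, sArr, Matrix.transpose_apply, Matrix.of_apply]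
  congr 1
  exact if_congr eq_comm rfl rfl

lemma Rmat23_sArr (R : Fin n → Fin n → Fin n → Fin n → ℂ) :
    Rmat23 n (sArr n R) = (Rmat23 n R).transpose := by
  ext p q
  simp only [Rmat23, sArr, Matrix.transpose_apply, Matrix.of_apply]
  congr 1
  exact if_congr eq_comm rfl rfl

lemma qybe_sArr (R : Fin n → Fin n → Fin n → Fin n → ℂ) (hR : QYBE n R) :
    QYBE n (sArr n R) := by
  unfold QYBE
  rw [Rmat12_sArr, Rmat13_sArr, Rmat23_sArr]
  have key : ∀ X Y Z : Matrix (Fin n × Fin n × Fin n) (Fin n × Fin n × Fin n) ℂ,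
      X.transpose * Y.transpose * Z.transpose = (Z * (Y * X)).transpose := by
    intro X Y Z
    rw [Matrix.transpose_mul, Matrix.transpose_mul, mul_assoc]
  rw [key, key]
  congr 1
  rw [← mul_assoc, ← mul_assoc, hR]

/-- the reversal anti-automorphism -/
def rv (M : Matrix (Fin m → Fin n) (Fin m → Fin n) ℂ) :
    Matrix (Fin m → Fin n) (Fin m → Fin n) ℂ :=
  Matrix.of fun f g => M (fun t => g t.rev) (fun t => f t.rev)

def revE (n m : ℕ) : (Fin m → Fin n) ≃ (Fin m → Fin n) where
  toFun f := fun t => f t.rev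
  invFun f := fun t => f t.rev
  left_inv f := by funext t; simp [Fin.rev_rev]
  right_inv f := by funext t; simp [Fin.rev_rev]

lemma rv_one : rv (1 : Matrix (Fin m → Fin n) (Fin m → Fin n) ℂ) = 1 := by
  ext f g
  simp only [rv, Matrix.of_apply, Matrix.one_apply]
  have hiff : ((fun t : Fin m => g t.rev) = fun t : Fin m => f t.rev) ↔ f = g := by
    constructor
    · intro h
      funext t
      have h2 := congrFun h t.rev
      simp only [Fin.rev_rev] at h2
      exact h2.symm
    · intro h
      rw [h]
  rw [if_congr hiff rfl rfl]

lemma rv_mul (M N : Matrix (Fin m → Fin n) (Fin m → Fin n) ℂ) :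
    rv (M * N) = rv N * rv M := by
  ext f g
  simp only [rv, Matrix.of_apply, Matrix.mul_apply]
  calc (∑ h : Fin m → Fin n, M (fun t => g t.rev) h * N h (fun t => f t.rev))
      = ∑ h : Fin m → Fin n, N h (fun t => f t.rev) * M (fun t => g t.rev) h :=
        Finset.sum_congr rfl fun h _ => mul_comm _ _
    _ = ∑ h : Fin m → Fin n,
          N (revE n m h) (fun t => f t.rev) * M (fun t => g t.rev) (revE n m h) :=
        (Equiv.sum_comp (revE n m)
          (fun h => N h (fun t => f t.rev) * M (fun t => g t.rev) h)).symm
    _ = ∑ h : Fin m → Fin n,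
          N (fun t => h t.rev) (fun t => f t.rev) *
            M (fun t => g t.rev) (fun t => h t.rev) :=
        Finset.sum_congr rfl fun h _ => rfl

lemma rv_sum {ι : Type*} (s : Finset ι)
    (F : ι → Matrix (Fin m → Fin n) (Fin m → Fin n) ℂ) :
    rv (∑ r ∈ s, F r) = ∑ r ∈ s, rv (F r) := by
  ext f g
  simp [rv, Matrix.sum_apply]

lemma sArr_PR (R : Fin n → Fin n → Fin n → Fin n → ℂ) (p q : Fin n × Fin n) :
    PRmat n (sArr n R) p q = PRmat n R (q.2, q.1) (p.2, p.1) := by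
  simp [PRmat, sArr]

lemma rv_site (R : Fin n → Fin n → Fin n → Fin n → ℂ) (k : ℕ) (hk : k + 1 < m) :
    rv (site n m (PRmat n R) k) = site n m (PRmat n (sArr n R)) (m - 2 - k) := by
  have hk2 : (m - 2 - k) + 1 < m := by omega
  have hkm : k < m := by omega
  have hk2m : m - 2 - k < m := by omega
  ext f g
  show site n m (PRmat n R) k (fun t => g t.rev) (fun t => f t.rev)
      = site n m (PRmat n (sArr n R)) (m - 2 - k) f g
  rw [site_apply (PRmat n R) k hk, site_apply (PRmat n (sArr n R)) (m - 2 - k) hk2]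
  have r1 : (⟨k, Nat.lt_of_succ_lt hk⟩ : Fin m).rev = ⟨(m - 2 - k) + 1, hk2⟩ := by
    ext
    simp only [Fin.val_rev]
    omega
  have r2 : (⟨k + 1, hk⟩ : Fin m).rev = ⟨m - 2 - k, hk2m⟩ := by
    ext
    simp only [Fin.val_rev]
    omega
  have hfac : PRmat n R
        (g (⟨k, Nat.lt_of_succ_lt hk⟩ : Fin m).rev, g (⟨k + 1, hk⟩ : Fin m).rev)
        (f (⟨k, Nat.lt_of_succ_lt hk⟩ : Fin m).rev, f (⟨k + 1, hk⟩ : Fin m).rev)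
      = PRmat n (sArr n R)
          (f ⟨m - 2 - k, Nat.lt_of_succ_lt hk2⟩, f ⟨(m - 2 - k) + 1, hk2⟩)
          (g ⟨m - 2 - k, Nat.lt_of_succ_lt hk2⟩, g ⟨(m - 2 - k) + 1, hk2⟩) := by
    rw [sArr_PR, r1, r2]
  rw [hfac]
  congr 1
  have hiff : (∀ t : Fin m, (t : ℕ) = k ∨ (t : ℕ) = k + 1 ∨ g t.rev = f t.rev)
      ↔ (∀ t : Fin m, (t : ℕ) = m - 2 - k ∨ (t : ℕ) = (m - 2 - k) + 1 ∨
          f t = g t) := by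
    constructor
    · intro h t
      have h2 := h t.rev
      have hv : ((t.rev : Fin m) : ℕ) = m - (t + 1) := Fin.val_rev t
      have htm : (t : ℕ) < m := t.isLt
      rcases h2 with h2 | h2 | h2
      · exact Or.inr (Or.inl (by omega))
      · exact Or.inl (by omega)
      · rw [Fin.rev_rev] at h2
        exact Or.inr (Or.inr h2.symm)
    · intro h t
      have h2 := h t.rev
      have hv : ((t.rev : Fin m) : ℕ) = m - (t + 1) := Fin.val_rev t
      have htm : (t : ℕ) < m := t.isLt
      rcases h2 with h2 | h2 | h2
      · exact Or.inr (Or.inl (by omega))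
      · exact Or.inl (by omega)
      · exact Or.inr (Or.inr h2.symm)
  rw [if_congr hiff rfl rfl]

lemma rv_chain (R : Fin n → Fin n → Fin n → Fin n → ℂ) (off : ℕ) :
    ∀ r : ℕ, off + r < m →
    rv (chain n m (PRmat n R) off r)
      = chain n m (PRmat n (sArr n R)) (m - 1 - off - r) r := by
  intro r
  induction r with
  | zero =>
      intro _
      rw [chain_zero, chain_zero, rv_one]
  | succ r ih =>
      intro h
      rw [chain_succ_right, rv_mul, ih (by omega), rv_site R (off + r) (by omega),
        show m - 2 - (off + r) = m - 1 - off - (r + 1) from by omega,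
        show m - 1 - off - r = (m - 1 - off - (r + 1)) + 1 from by omega,
        ← chain_succ_left]

lemma rv_bint (R : Fin n → Fin n → Fin n → Fin n → ℂ) (off k : ℕ)
    (h : off + (k + 1) ≤ m) :
    rv (braidedInt n m R off (k + 1))
      = Vee n m (sArr n R) (m - off - (k + 1)) (k + 1) := by
  rw [braidedInt, rv_sum, Vee]
  apply Finset.sum_congr rfl
  intro r hr
  have hrk := Finset.mem_range.mp hr
  rw [rv_chain R off r (by omega),
    show m - off - (k + 1) + (k + 1) - (r + 1) = m - 1 - off - r from by omega]

lemma rv_Fact (R : Fin n → Fin n → Fin n → Fin n → ℂ) (hR : QYBE n R) :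
    ∀ k off, off + k ≤ m →
    rv (Fact n m R off k) = Fact n m (sArr n R) (m - off - k) k := by
  intro k
  induction k with
  | zero =>
      intro off _
      rw [Fact_zero, Fact_zero, rv_one]
  | succ k ih =>
      intro off h
      rw [Fact_succ, rv_mul, ih (off + 1) (by omega), rv_bint R off k h,
        show m - (off + 1) - k = m - off - (k + 1) from by omega]
      exact (factB (sArr n R) (qybe_sArr R hR) k (m - off - (k + 1)) (by omega)).symm

end Stmt15Aux

namespace Stmt15Aux

variable {n m : ℕ}

/-- m-fold tensor power of η -/
def Eta (n m : ℕ) (η : Matrix (Fin n) (Fin n) ℂ) :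
    Matrix (Fin m → Fin n) (Fin m → Fin n) ℂ :=
  Matrix.of fun f g => ∏ t : Fin m, η (f t) (g t)

lemma cov_PR (R : Fin n → Fin n → Fin n → Fin n → ℂ)
    (η : Matrix (Fin n) (Fin n) ℂ) (hcov : MetricCovariant n R η)
    (i j u v : Fin n) :
    (∑ x : Fin n, ∑ y : Fin n, PRmat n R (i, j) (x, y) * η x u * η y v)
      = ∑ x : Fin n, ∑ y : Fin n,
          η i x * η j y * PRmat n (sArr n R) (x, y) (u, v) := by
  have h := hcov j i u v
  simp only [PRmat, sArr, Matrix.of_apply]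
  rw [← h, Finset.sum_comm]
  exact Finset.sum_congr rfl fun x _ => Finset.sum_congr rfl fun y _ => by ring

lemma prod_split (a b : Fin m) (hab : a ≠ b) (F : Fin m → ℂ) :
    (∏ t : Fin m, F t)
      = F a * (F b * ∏ t ∈ (Finset.univ.erase a).erase b, F t) := by
  rw [← Finset.mul_prod_erase Finset.univ F (Finset.mem_univ a),
    ← Finset.mul_prod_erase (Finset.univ.erase a) F
      (Finset.mem_erase.mpr ⟨hab.symm, Finset.mem_univ b⟩)]

lemma site_Eta (R : Fin n → Fin n → Fin n → Fin n → ℂ)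
    (η : Matrix (Fin n) (Fin n) ℂ) (hcov : MetricCovariant n R η) (k : ℕ) :
    site n m (PRmat n R) k * Eta n m η
      = Eta n m η * site n m (PRmat n (sArr n R)) k := by
  by_cases hk : k + 1 < m
  · ext f g
    rw [site_mul_apply _ _ k hk, mul_site_apply _ _ k hk]
    set ak : Fin m := ⟨k, Nat.lt_of_succ_lt hk⟩ with hak
    set bk : Fin m := ⟨k + 1, hk⟩ with hbk
    have hab : ak ≠ bk := by
      simp only [hak, hbk, Ne, Fin.mk.injEq]
      omega
    set P : ℂ := ∏ t ∈ (Finset.univ.erase ak).erase bk, η (f t) (g t) with hP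
    have El : ∀ x y : Fin n, Eta n m η (upd n m k hk f x y) g
        = η x (g ak) * (η y (g bk) * P) := by
      intro x y
      show (∏ t : Fin m, η (upd n m k hk f x y t) (g t)) = _
      rw [prod_split ak bk hab (fun t => η (upd n m k hk f x y t) (g t))]
      rw [upd_a, upd_b]
      congr 1
      congr 1
      apply Finset.prod_congr rfl
      intro t ht
      have h1 := Finset.mem_erase.mp ht
      have h2 := Finset.mem_erase.mp h1.2
      rw [upd_ne _ _ _ _ _ t (fun hc => h2.1 (Fin.ext hc)) (fun hc => h1.1 (Fin.ext hc))]
    have Er : ∀ x y : Fin n, Eta n m η f (upd n m k hk g x y)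
        = η (f ak) x * (η (f bk) y * P) := by
      intro x y
      show (∏ t : Fin m, η (f t) (upd n m k hk g x y t)) = _
      rw [prod_split ak bk hab (fun t => η (f t) (upd n m k hk g x y t))]
      rw [upd_a, upd_b]
      congr 1
      congr 1
      apply Finset.prod_congr rfl
      intro t ht
      have h1 := Finset.mem_erase.mp ht
      have h2 := Finset.mem_erase.mp h1.2
      rw [upd_ne _ _ _ _ _ t (fun hc => h2.1 (Fin.ext hc)) (fun hc => h1.1 (Fin.ext hc))]
    have stepL : ∀ x y : Fin n,
        PRmat n R (f ak, f bk) (x, y) * Eta n m η (upd n m k hk f x y) g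
          = (PRmat n R (f ak, f bk) (x, y) * η x (g ak) * η y (g bk)) * P := by
      intro x y
      rw [El x y]
      ring
    have stepR : ∀ x y : Fin n,
        Eta n m η f (upd n m k hk g x y) * PRmat n (sArr n R) (x, y) (g ak, g bk)
          = (η (f ak) x * η (f bk) y * PRmat n (sArr n R) (x, y) (g ak, g bk)) * P := by
      intro x y
      rw [Er x y]
      ring
    rw [Finset.sum_congr rfl (fun x _ => Finset.sum_congr rfl fun y _ => stepL x y),
      Finset.sum_congr rfl (fun x _ => Finset.sum_congr rfl fun y _ => stepR x y)]
    simp only [← Finset.sum_mul]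
    exact congrArg (· * P) (cov_PR R η hcov (f ak) (f bk) (g ak) (g bk))
  · rw [site_not _ _ hk, site_not _ _ hk, one_mul, mul_one]

lemma chain_Eta (R : Fin n → Fin n → Fin n → Fin n → ℂ)
    (η : Matrix (Fin n) (Fin n) ℂ) (hcov : MetricCovariant n R η) (off : ℕ) :
    ∀ r : ℕ, chain n m (PRmat n R) off r * Eta n m η
      = Eta n m η * chain n m (PRmat n (sArr n R)) off r := by
  intro r
  induction r with
  | zero => rw [chain_zero, chain_zero, one_mul, mul_one]
  | succ r ih =>
      rw [chain_succ_right, chain_succ_right, mul_assoc,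
        site_Eta R η hcov (off + r), ← mul_assoc, ih, mul_assoc]

lemma bint_Eta (R : Fin n → Fin n → Fin n → Fin n → ℂ)
    (η : Matrix (Fin n) (Fin n) ℂ) (hcov : MetricCovariant n R η) (off k : ℕ) :
    braidedInt n m R off k * Eta n m η
      = Eta n m η * braidedInt n m (sArr n R) off k := by
  rw [braidedInt, braidedInt, Finset.sum_mul, Finset.mul_sum]
  exact Finset.sum_congr rfl fun r _ => chain_Eta R η hcov off r

lemma Fact_Eta (R : Fin n → Fin n → Fin n → Fin n → ℂ)
    (η : Matrix (Fin n) (Fin n) ℂ) (hcov : MetricCovariant n R η) :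
    ∀ k off, Fact n m R off k * Eta n m η
      = Eta n m η * Fact n m (sArr n R) off k := by
  intro k
  induction k with
  | zero =>
      intro off
      rw [Fact_zero, Fact_zero, one_mul, mul_one]
  | succ k ih =>
      intro off
      rw [Fact_succ, Fact_succ, mul_assoc, bint_Eta R η hcov off (k + 1),
        ← mul_assoc, ih (off + 1), mul_assoc]

lemma fact_aux (R : Fin n → Fin n → Fin n → Fin n → ℂ) :
    ∀ j off, ((List.range j).map fun t =>
        braidedInt n m R (off + (j - (t + 1))) (t + 2)).prod
      = Fact n m R off (j + 1) := by
  intro j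
  induction j with
  | zero =>
      intro off
      rw [List.range_zero, List.map_nil, List.prod_nil, Fact_succ, Fact_zero,
        one_mul, braidedInt_one]
  | succ j ih =>
      intro off
      rw [List.range_succ, List.map_append, List.prod_append, List.map_singleton,
        List.prod_singleton]
      have h1 : ((List.range j).map fun t =>
          braidedInt n m R (off + (j + 1 - (t + 1))) (t + 2)).prod
          = ((List.range j).map fun t =>
            braidedInt n m R ((off + 1) + (j - (t + 1))) (t + 2)).prod := by
        refine congrArg List.prod (List.map_congr_left ?_)
        intro t ht
        have htj := List.mem_range.mp ht
        rw [show off + (j + 1 - (t + 1)) = (off + 1) + (j - (t + 1)) from by omega]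
      rw [h1, ih (off + 1), show off + (j + 1 - (j + 1)) = off from by omega,
        ← Fact_succ]

lemma braidedFact_eq (R : Fin n → Fin n → Fin n → Fin n → ℂ) (hm : 1 ≤ m) :
    braidedFact n m R = Fact n m R 0 m := by
  obtain ⟨j, hj⟩ : ∃ j, m = j + 1 := ⟨m - 1, by omega⟩
  rw [braidedFact]
  have h1 : ((List.range (m - 1)).map fun t =>
      braidedInt n m R (m - (t + 2)) (t + 2)).prod
      = ((List.range j).map fun t =>
        braidedInt n m R (0 + (j - (t + 1))) (t + 2)).prod := by
    rw [show m - 1 = j from by omega]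
    refine congrArg List.prod (List.map_congr_left ?_)
    intro t ht
    have htj := List.mem_range.mp ht
    rw [show m - (t + 2) = 0 + (j - (t + 1)) from by omega]
  rw [h1, fact_aux R j 0, show j + 1 = m from by omega]

end Stmt15Aux

/-- if `R` obeys the QYBE and `η` is invertible and `R`-covariant,
then for every `m ≥ 1`,
`Σ_b ([m;R]!)^{a}_{b} η^{b_1 i_1}⋯η^{b_m i_m}
 = Σ_b η^{a_1 b_1}⋯η^{a_m b_m} ([m;R]!)^{i_m⋯i_1}_{b_m⋯b_1}`. -/
theorem stmt15 (n : ℕ) (hn : 1 ≤ n)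
    (R : Fin n → Fin n → Fin n → Fin n → ℂ) (hR : QYBE n R)
    (η : Matrix (Fin n) (Fin n) ℂ) (hη : IsUnit η)
    (hcov : MetricCovariant n R η)
    (m : ℕ) (hm : 1 ≤ m) (a i : Fin m → Fin n) :
    (∑ b : Fin m → Fin n,
      braidedFact n m R a b * ∏ t : Fin m, η (b t) (i t)) =
    ∑ b : Fin m → Fin n,
      (∏ t : Fin m, η (a t) (b t)) *
        braidedFact n m R (fun t => i t.rev) (fun t => b t.rev) := by
  classical
  have l1 : (∑ b : Fin m → Fin n,
      braidedFact n m R a b * ∏ t : Fin m, η (b t) (i t))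
      = (braidedFact n m R * Stmt15Aux.Eta n m η) a i := by
    rw [Matrix.mul_apply]
    rfl
  have l2 : (∑ b : Fin m → Fin n,
      (∏ t : Fin m, η (a t) (b t)) *
        braidedFact n m R (fun t => i t.rev) (fun t => b t.rev))
      = (Stmt15Aux.Eta n m η * Stmt15Aux.rv (braidedFact n m R)) a i := by
    rw [Matrix.mul_apply]
    rfl
  rw [l1, l2]
  have key : braidedFact n m R * Stmt15Aux.Eta n m η
      = Stmt15Aux.Eta n m η * Stmt15Aux.rv (braidedFact n m R) := by
    rw [Stmt15Aux.braidedFact_eq R hm]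
    rw [Stmt15Aux.rv_Fact R hR m 0 (by omega),
      show m - 0 - m = 0 from by omega]
    exact Stmt15Aux.Fact_Eta R η hcov m 0
  rw [key]
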